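/- Assume additionally that A is unitary. Then for every 1 ≤ k ≤ N−1: h_{k+1,k} = σ_{k−1}(0)/σ_k(0) = s_k(0), h_{1,k} = −q_k(0)/(σ_{k−1}(0)·σ_k(0)), and, setting ṽ_k := σ_{k−1}(0)^{−1}·Σ_{j=0}^{k−1} conj(q_j(0))·v_{j+1}, the coupled recurrences A·v_k = s_k(0)·v_{k+1} + (−1)^{k−1}·c_k(0)·ṽ_k and ṽ_{k+1} = s_k(0)·ṽ_k + (−1)^k·conj(c_k(0))·v_{k+1} hold (isometric Arnoldi recurrence). -/

import Mathlib

open Polynomial Matrix Finset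

/-- The standard inner product `x^* y` on `ℂ^n` (conjugate-linear in the first slot). -/
noncomputable def inn {n : ℕ} (x y : Fin n → ℂ) : ℂ := ∑ i, (starRingEnd ℂ) (x i) * y i

/-- The Euclidean norm on `ℂ^n`. -/
noncomputable def nrm {n : ℕ} (x : Fin n → ℂ) : ℝ := Real.sqrt (inn x x).re

/-- `σ_k(δ) = sqrt(Σ_{j=0}^k |q_j(δ)|²)`. -/
noncomputable def sigmaP (q : ℕ → Polynomial ℂ) (δ : ℂ) (k : ℕ) : ℝ :=
  Real.sqrt (∑ j ∈ Finset.range (k + 1), ‖(q j).eval δ‖ ^ 2)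



lemma inn_sum_left {n : ℕ} {α : Type*} (s : Finset α) (f : α → Fin n → ℂ) (y : Fin n → ℂ) :
    inn (∑ a ∈ s, f a) y = ∑ a ∈ s, inn (f a) y := by
  simp only [inn, Finset.sum_apply, map_sum, Finset.sum_mul]
  exact Finset.sum_comm

lemma inn_smul_left {n : ℕ} (c : ℂ) (x y : Fin n → ℂ) :
    inn (c • x) y = (starRingEnd ℂ) c * inn x y := by
  simp only [inn, Pi.smul_apply, smul_eq_mul, _root_.map_mul, Finset.mul_sum, mul_assoc]

lemma inn_sum_right {n : ℕ} {α : Type*} (s : Finset α) (x : Fin n → ℂ) (f : α → Fin n → ℂ) :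
    inn x (∑ a ∈ s, f a) = ∑ a ∈ s, inn x (f a) := by
  simp only [inn, Finset.sum_apply, Finset.mul_sum]
  exact Finset.sum_comm

lemma inn_smul_right {n : ℕ} (c : ℂ) (x y : Fin n → ℂ) :
    inn x (c • y) = c * inn x y := by
  simp only [inn, Pi.smul_apply, smul_eq_mul, Finset.mul_sum]
  exact Finset.sum_congr rfl fun i _ => by ring

lemma inn_expand {n N : ℕ} (v : ℕ → Fin n → ℂ)
    (horth : ∀ i j : ℕ, i < N → j < N → inn (v i) (v j) = if i = j then 1 else 0)
    (c d : ℕ → ℂ) :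
    inn (∑ l ∈ Finset.range N, c l • v l) (∑ m ∈ Finset.range N, d m • v m)
      = ∑ l ∈ Finset.range N, (starRingEnd ℂ) (c l) * d l := by
  rw [inn_sum_left]
  refine Finset.sum_congr rfl fun l hl => ?_
  rw [inn_sum_right]
  have : ∀ m ∈ Finset.range N, inn (c l • v l) (d m • v m)
      = if l = m then (starRingEnd ℂ) (c l) * d l else 0 := by
    intro m hm
    rw [inn_smul_right, inn_smul_left, horth l m (mem_range.mp hl) (mem_range.mp hm)]
    split_ifs with h
    · subst h; ring
    · ring
  rw [Finset.sum_congr rfl this, Finset.sum_ite_eq _ l, if_pos hl]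

lemma unit_inn {n : ℕ} (A : Matrix (Fin n) (Fin n) ℂ) (hA : Aᴴ * A = 1) (x y : Fin n → ℂ) :
    inn (A.mulVec x) (A.mulVec y) = inn x y := by
  have h1 : inn (A.mulVec x) (A.mulVec y) = star x ⬝ᵥ ((Aᴴ * A).mulVec y) := by
    show star (A.mulVec x) ⬝ᵥ (A.mulVec y) = _
    rw [star_mulVec, dotProduct_mulVec, dotProduct_mulVec, vecMul_vecMul]
  rw [h1, hA, Matrix.one_mulVec]
  rfl


lemma sigmaP_sq (q : ℕ → Polynomial ℂ) (δ : ℂ) (k : ℕ) :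
    sigmaP q δ k ^ 2 = ∑ j ∈ Finset.range (k + 1), ‖(q j).eval δ‖ ^ 2 :=
  Real.sq_sqrt (Finset.sum_nonneg fun _ _ => sq_nonneg _)

lemma sigmaP_pos (q : ℕ → Polynomial ℂ) (hq0 : q 0 = 1) (δ : ℂ) (k : ℕ) :
    0 < sigmaP q δ k := by
  apply Real.sqrt_pos.mpr
  have h0 : (0:ℕ) ∈ Finset.range (k+1) := by simp
  have := Finset.single_le_sum (f := fun j => ‖(q j).eval δ‖ ^ 2)
    (fun i _ => sq_nonneg _) h0
  simp [hq0] at this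
  linarith

noncomputable def hEnt {N : ℕ} (H : Matrix (Fin N) (Fin N) ℂ) (i j : ℕ) : ℂ :=
  if h : i < N ∧ j < N then H ⟨i, h.1⟩ ⟨j, h.2⟩ else 0

lemma hEnt_eq {N : ℕ} (H : Matrix (Fin N) (Fin N) ℂ) {i j : ℕ} (hi : i < N) (hj : j < N) :
    hEnt H i j = H ⟨i, hi⟩ ⟨j, hj⟩ := dif_pos ⟨hi, hj⟩

lemma hEnt_zero {N : ℕ} (H : Matrix (Fin N) (Fin N) ℂ)
    (hHess : ∀ i j : Fin N, (j : ℕ) + 1 < (i : ℕ) → H i j = 0)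
    {i j : ℕ} (h : j + 1 < i) : hEnt H i j = 0 := by
  unfold hEnt
  split_ifs with h'
  · exact hHess _ _ h
  · rfl

lemma keysum (q : ℕ → Polynomial ℂ) (J : ℕ) :
    (∑ l ∈ Finset.range (J+1), (q l).eval 0 * (starRingEnd ℂ) ((q l).eval 0))
      = ((sigmaP q 0 J ^ 2 : ℝ) : ℂ) := by
  rw [sigmaP_sq]
  push_cast
  refine Finset.sum_congr rfl fun l _ => ?_
  rw [Complex.mul_conj]
  norm_cast
  exact (Complex.sq_norm _).symm

section Main

variable {n N : ℕ}

theorem main (hN : 1 ≤ N)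
    (A : Matrix (Fin n) (Fin n) ℂ)
    (v : ℕ → Fin n → ℂ)
    (horth : ∀ i j : ℕ, i < N → j < N → inn (v i) (v j) = if i = j then 1 else 0)
    (H : Matrix (Fin N) (Fin N) ℂ)
    (hHess : ∀ i j : Fin N, (j : ℕ) + 1 < (i : ℕ) → H i j = 0)
    (hsub : ∀ (k : ℕ) (hk : k + 1 < N),
      0 < (H ⟨k + 1, hk⟩ ⟨k, Nat.lt_of_succ_lt hk⟩).re ∧
        (H ⟨k + 1, hk⟩ ⟨k, Nat.lt_of_succ_lt hk⟩).im = 0)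
    (harn : ∀ (k : ℕ) (hk : k + 1 < N),
      A.mulVec (v k) = ∑ j : Fin (k + 2),
        H ⟨(j : ℕ), Nat.lt_of_le_of_lt (Nat.lt_succ_iff.mp j.isLt) hk⟩
          ⟨k, Nat.lt_of_succ_lt hk⟩ • v (j : ℕ))
    (q : ℕ → Polynomial ℂ) (hq0 : q 0 = 1)
    (hqrec : ∀ (k : ℕ) (hk : k + 1 < N),
      Polynomial.C (H ⟨k + 1, hk⟩ ⟨k, Nat.lt_of_succ_lt hk⟩) * q (k + 1) =
        Polynomial.X * q k -
          ∑ j : Fin (k + 1),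
            Polynomial.C (H ⟨(j : ℕ), Nat.lt_trans j.isLt hk⟩ ⟨k, Nat.lt_of_succ_lt hk⟩) *
              q (j : ℕ))
    (hA : Aᴴ * A = 1) :
    ∀ m, m + 1 < N →
      (∀ j, j < m + 1 → ((sigmaP q 0 m * sigmaP q 0 (m+1) : ℝ) : ℂ) * hEnt H j m
          = -((starRingEnd ℂ) ((q j).eval 0)) * (q (m+1)).eval 0) ∧
      ((sigmaP q 0 (m+1) : ℝ) : ℂ) * hEnt H (m+1) m = ((sigmaP q 0 m : ℝ) : ℂ) := by
  -- preliminaries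
  have hσpos : ∀ j, 0 < sigmaP q 0 j := fun j => sigmaP_pos q hq0 0 j
  have hσne : ∀ j, ((sigmaP q 0 j : ℝ) : ℂ) ≠ 0 := fun j => by
    exact_mod_cast Complex.ofReal_ne_zero.mpr (ne_of_gt (hσpos j))
  have hqq0 : (q 0).eval 0 = 1 := by simp [hq0]
  have arn' : ∀ c, c + 1 < N → A.mulVec (v c) = ∑ l ∈ Finset.range N, hEnt H l c • v l := by
    intro c hc
    rw [harn c hc]
    have e1 : (∑ j : Fin (c + 2),
        H ⟨(j : ℕ), Nat.lt_of_le_of_lt (Nat.lt_succ_iff.mp j.isLt) hc⟩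
          ⟨c, Nat.lt_of_succ_lt hc⟩ • v (j : ℕ))
        = ∑ l ∈ Finset.range (c+2), hEnt H l c • v l := by
      rw [← Fin.sum_univ_eq_sum_range (fun l => hEnt H l c • v l) (c+2)]
      refine Finset.sum_congr rfl fun j _ => ?_
      rw [hEnt_eq H (Nat.lt_of_le_of_lt (Nat.lt_succ_iff.mp j.isLt) hc) (Nat.lt_of_succ_lt hc)]
    rw [e1]
    refine Finset.sum_subset (Finset.range_subset_range.mpr (by omega)) fun x hx hx' => ?_
    rw [hEnt_zero H hHess (by simp only [mem_range] at hx hx'; omega), zero_smul]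
  have colorth : ∀ i j, i + 1 < N → j + 1 < N →
      ∑ l ∈ Finset.range N, (starRingEnd ℂ) (hEnt H l i) * hEnt H l j
        = if i = j then 1 else 0 := by
    intro i j hi hj
    have h1 := unit_inn A hA (v i) (v j)
    rw [arn' i hi, arn' j hj, inn_expand v horth, horth i j (by omega) (by omega)] at h1
    exact h1
  have qrec0 : ∀ c, c + 1 < N → hEnt H (c+1) c * (q (c+1)).eval 0
      = -∑ l ∈ Finset.range (c+1), hEnt H l c * (q l).eval 0 := by
    intro c hc
    have h2 := congrArg (Polynomial.eval 0) (hqrec c hc)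
    simp only [Polynomial.eval_mul, Polynomial.eval_C, Polynomial.eval_sub, Polynomial.eval_X,
      Polynomial.eval_finset_sum, zero_mul, zero_sub] at h2
    rw [hEnt_eq H hc (Nat.lt_of_succ_lt hc), h2]
    congr 1
    rw [← Fin.sum_univ_eq_sum_range (fun l => hEnt H l c * (q l).eval 0) (c+1)]
    refine Finset.sum_congr rfl fun j _ => ?_
    rw [hEnt_eq H (Nat.lt_trans j.isLt hc) (Nat.lt_of_succ_lt hc)]
  intro m
  induction m using Nat.strong_induction_on with
  | _ m ih =>
  intro hm
  have stepA : ∀ l, l ≤ m → hEnt H l m = (starRingEnd ℂ) ((q l).eval 0) * hEnt H 0 m := by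
    intro l
    induction l using Nat.strong_induction_on with
    | _ l ihl =>
    intro hlm
    rcases Nat.eq_zero_or_pos l with rfl | hl
    · rw [hqq0]; simp
    obtain ⟨t, rfl⟩ : ∃ t, l = t + 1 := ⟨l - 1, by omega⟩
    have htm : t < m := by omega
    have htN : t + 1 < N := by omega
    have col := ih t htm htN
    have E := colorth t m htN hm
    rw [if_neg (by omega)] at E
    have E1 : ∑ x ∈ Finset.range (t + 2), (starRingEnd ℂ) (hEnt H x t) * hEnt H x m = 0 := by
      rw [← E]
      refine Finset.sum_subset (Finset.range_subset_range.mpr (by omega)) fun x hx hx' => ?_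
      rw [hEnt_zero H hHess (by simp only [mem_range] at hx hx'; omega), map_zero, zero_mul]
    rw [Finset.sum_range_succ] at E1
    have E2 := congrArg (fun z => ((sigmaP q 0 t * sigmaP q 0 (t+1) : ℝ) : ℂ) * z) E1
    simp only [mul_add, Finset.mul_sum, mul_zero] at E2
    have hterm : ∀ x ∈ Finset.range (t+1),
        ((sigmaP q 0 t * sigmaP q 0 (t+1) : ℝ) : ℂ) * ((starRingEnd ℂ) (hEnt H x t) * hEnt H x m)
        = -(((q x).eval 0 * (starRingEnd ℂ) ((q x).eval 0)) *
            ((starRingEnd ℂ) ((q (t+1)).eval 0) * hEnt H 0 m)) := by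
      intro x hx
      have hx' : x < t + 1 := mem_range.mp hx
      have hcl := col.1 x hx'
      have hconj := congrArg (starRingEnd ℂ) hcl
      simp only [_root_.map_mul, map_neg, Complex.conj_ofReal, Complex.conj_conj] at hconj
      have hval := ihl x (by omega) (by omega)
      calc ((sigmaP q 0 t * sigmaP q 0 (t+1) : ℝ) : ℂ) *
            ((starRingEnd ℂ) (hEnt H x t) * hEnt H x m)
          = (((sigmaP q 0 t * sigmaP q 0 (t+1) : ℝ) : ℂ) * (starRingEnd ℂ) (hEnt H x t)) *
              hEnt H x m := by ring
        _ = (-((q x).eval 0) * (starRingEnd ℂ) ((q (t+1)).eval 0)) *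
              ((starRingEnd ℂ) ((q x).eval 0) * hEnt H 0 m) := by rw [hconj, hval]
        _ = _ := by ring
    rw [Finset.sum_congr rfl hterm] at E2
    have hsum : ∑ x ∈ Finset.range (t+1),
        -(((q x).eval 0 * (starRingEnd ℂ) ((q x).eval 0)) *
          ((starRingEnd ℂ) ((q (t+1)).eval 0) * hEnt H 0 m))
        = -(((sigmaP q 0 t ^ 2 : ℝ) : ℂ) *
            ((starRingEnd ℂ) ((q (t+1)).eval 0) * hEnt H 0 m)) := by
      rw [Finset.sum_neg_distrib, ← Finset.sum_mul, keysum]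
    rw [hsum] at E2
    have hlast : ((sigmaP q 0 t * sigmaP q 0 (t+1) : ℝ) : ℂ) *
        ((starRingEnd ℂ) (hEnt H (t+1) t) * hEnt H (t+1) m)
        = ((sigmaP q 0 t ^ 2 : ℝ) : ℂ) * hEnt H (t+1) m := by
      have h2 := congrArg (starRingEnd ℂ) col.2
      simp only [_root_.map_mul, Complex.conj_ofReal] at h2
      push_cast
      linear_combination (((sigmaP q 0 t : ℝ) : ℂ) * hEnt H (t+1) m) * h2
    rw [hlast] at E2
    have hfac : ((sigmaP q 0 t : ℝ) : ℂ)^2 *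
        (hEnt H (t+1) m - (starRingEnd ℂ) ((q (t+1)).eval 0) * hEnt H 0 m) = 0 := by
      push_cast at E2 ⊢
      linear_combination E2
    rcases mul_eq_zero.mp hfac with h | h
    · exact absurd h (pow_ne_zero 2 (hσne t))
    · exact sub_eq_zero.mp h
  have R : hEnt H (m+1) m * (q (m+1)).eval 0
      = -(((sigmaP q 0 m ^ 2 : ℝ) : ℂ) * hEnt H 0 m) := by
    rw [qrec0 m hm]
    congr 1
    calc ∑ l ∈ Finset.range (m+1), hEnt H l m * (q l).eval 0
        = ∑ l ∈ Finset.range (m+1),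
            ((q l).eval 0 * (starRingEnd ℂ) ((q l).eval 0)) * hEnt H 0 m := by
          refine Finset.sum_congr rfl fun l hl => ?_
          rw [stepA l (by have := mem_range.mp hl; omega)]
          ring
      _ = (∑ l ∈ Finset.range (m+1), (q l).eval 0 * (starRingEnd ℂ) ((q l).eval 0)) *
            hEnt H 0 m := (Finset.sum_mul _ _ _).symm
      _ = _ := by rw [keysum]
  have Nm := colorth m m hm hm
  rw [if_pos rfl] at Nm
  have Nm1 : ∑ l ∈ Finset.range (m+2), (starRingEnd ℂ) (hEnt H l m) * hEnt H l m = 1 := by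
    rw [← Nm]
    refine Finset.sum_subset (Finset.range_subset_range.mpr (by omega)) fun x hx hx' => ?_
    rw [hEnt_zero H hHess (by simp only [mem_range] at hx hx'; omega), mul_zero]
  rw [Finset.sum_range_succ] at Nm1
  have hsumN : ∑ l ∈ Finset.range (m+1), (starRingEnd ℂ) (hEnt H l m) * hEnt H l m
      = ((sigmaP q 0 m ^ 2 : ℝ) : ℂ) *
          ((starRingEnd ℂ) (hEnt H 0 m) * hEnt H 0 m) := by
    calc ∑ l ∈ Finset.range (m+1), (starRingEnd ℂ) (hEnt H l m) * hEnt H l m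
        = ∑ l ∈ Finset.range (m+1), ((q l).eval 0 * (starRingEnd ℂ) ((q l).eval 0)) *
            ((starRingEnd ℂ) (hEnt H 0 m) * hEnt H 0 m) := by
          refine Finset.sum_congr rfl fun l hl => ?_
          rw [stepA l (by have := mem_range.mp hl; omega)]
          simp only [_root_.map_mul, Complex.conj_conj]
          ring
      _ = (∑ l ∈ Finset.range (m+1), (q l).eval 0 * (starRingEnd ℂ) ((q l).eval 0)) *
            ((starRingEnd ℂ) (hEnt H 0 m) * hEnt H 0 m) := (Finset.sum_mul _ _ _).symm
      _ = _ := by rw [keysum]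
  rw [hsumN] at Nm1
  obtain ⟨hre, him⟩ := hsub m hm
  set r : ℝ := (H ⟨m + 1, hm⟩ ⟨m, Nat.lt_of_succ_lt hm⟩).re with hrdef
  have ham : hEnt H (m+1) m = ((r : ℝ) : ℂ) := by
    rw [hEnt_eq H hm (Nat.lt_of_succ_lt hm)]
    apply Complex.ext
    · simp [hrdef]
    · simp [him]
  rw [ham] at Nm1
  rw [ham] at R
  simp only [Complex.conj_ofReal] at Nm1
  have Rc := congrArg (starRingEnd ℂ) R
  simp only [_root_.map_mul, map_neg, Complex.conj_ofReal] at Rc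
  have habs : (q (m+1)).eval 0 * (starRingEnd ℂ) ((q (m+1)).eval 0)
      = ((‖(q (m+1)).eval 0‖ ^ 2 : ℝ) : ℂ) := by
    rw [Complex.mul_conj]
    norm_cast
    exact (Complex.sq_norm _).symm
  have hstep : ((sigmaP q 0 (m+1) ^ 2 : ℝ) : ℂ)
      = ((sigmaP q 0 m ^ 2 : ℝ) : ℂ) + ((‖(q (m+1)).eval 0‖ ^ 2 : ℝ) : ℂ) := by
    rw [sigmaP_sq, sigmaP_sq, Finset.sum_range_succ, Complex.ofReal_add]
  have EC : ((r ^ 2 * sigmaP q 0 (m+1) ^ 2 : ℝ) : ℂ) = ((sigmaP q 0 m ^ 2 : ℝ) : ℂ) := by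
    push_cast at Nm1 R Rc habs hstep ⊢
    linear_combination ((r : ℝ) : ℂ)^2 * hstep - ((r : ℝ) : ℂ)^2 * habs +
      (((r : ℝ) : ℂ) * (starRingEnd ℂ) ((q (m+1)).eval 0)) * R -
      (((sigmaP q 0 m : ℝ) : ℂ)^2 * hEnt H 0 m) * Rc +
      ((sigmaP q 0 m : ℝ) : ℂ)^2 * Nm1
  have rr : r ^ 2 * sigmaP q 0 (m+1) ^ 2 = sigmaP q 0 m ^ 2 := by exact_mod_cast EC
  have hreq : r * sigmaP q 0 (m+1) = sigmaP q 0 m := by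
    have h1 : (r * sigmaP q 0 (m+1) - sigmaP q 0 m) *
        (r * sigmaP q 0 (m+1) + sigmaP q 0 m) = 0 := by linear_combination rr
    rcases mul_eq_zero.mp h1 with h | h
    · linarith
    · nlinarith [hσpos (m+1), hσpos m, mul_pos hre (hσpos (m+1))]
  have creal : ((r : ℝ) : ℂ) * ((sigmaP q 0 (m+1) : ℝ) : ℂ) = ((sigmaP q 0 m : ℝ) : ℂ) := by
    exact_mod_cast congrArg Complex.ofReal hreq
  constructor
  · intro j hj
    rw [stepA j (by omega)]
    have hz : ((sigmaP q 0 m : ℝ) : ℂ) *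
        (((sigmaP q 0 m * sigmaP q 0 (m+1) : ℝ) : ℂ) * hEnt H 0 m + (q (m+1)).eval 0) = 0 := by
      push_cast
      push_cast at R
      linear_combination ((sigmaP q 0 (m+1) : ℝ) : ℂ) * R - (q (m+1)).eval 0 * creal
    have hc : ((sigmaP q 0 m * sigmaP q 0 (m+1) : ℝ) : ℂ) * hEnt H 0 m
        = -((q (m+1)).eval 0) := by
      rcases mul_eq_zero.mp hz with h | h
      · exact absurd h (hσne m)
      · exact eq_neg_of_add_eq_zero_left h
    linear_combination (starRingEnd ℂ) ((q j).eval 0) * hc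
  · rw [ham, ← Complex.ofReal_mul]
    rw [mul_comm] at hreq
    exact congrArg Complex.ofReal hreq


end Main


lemma arnFull {n N : ℕ} (A : Matrix (Fin n) (Fin n) ℂ) (v : ℕ → Fin n → ℂ)
    (H : Matrix (Fin N) (Fin N) ℂ)
    (hHess : ∀ i j : Fin N, (j : ℕ) + 1 < (i : ℕ) → H i j = 0)
    (harn : ∀ (k : ℕ) (hk : k + 1 < N),
      A.mulVec (v k) = ∑ j : Fin (k + 2),
        H ⟨(j : ℕ), Nat.lt_of_le_of_lt (Nat.lt_succ_iff.mp j.isLt) hk⟩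
          ⟨k, Nat.lt_of_succ_lt hk⟩ • v (j : ℕ))
    (c : ℕ) (hc : c + 1 < N) :
    A.mulVec (v c) = ∑ l ∈ Finset.range N, hEnt H l c • v l := by
  rw [harn c hc]
  have e1 : (∑ j : Fin (c + 2),
      H ⟨(j : ℕ), Nat.lt_of_le_of_lt (Nat.lt_succ_iff.mp j.isLt) hc⟩
        ⟨c, Nat.lt_of_succ_lt hc⟩ • v (j : ℕ))
      = ∑ l ∈ Finset.range (c+2), hEnt H l c • v l := by
    rw [← Fin.sum_univ_eq_sum_range (fun l => hEnt H l c • v l) (c+2)]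
    refine Finset.sum_congr rfl fun j _ => ?_
    rw [hEnt_eq H (Nat.lt_of_le_of_lt (Nat.lt_succ_iff.mp j.isLt) hc) (Nat.lt_of_succ_lt hc)]
  rw [e1]
  refine Finset.sum_subset (Finset.range_subset_range.mpr (by omega)) fun x hx hx' => ?_
  rw [hEnt_zero H hHess (by simp only [mem_range] at hx hx'; omega), zero_smul]

/-- If `A` is unitary then for `1 ≤ k ≤ N-1`:
`h_{k+1,k} = σ_{k-1}(0)/σ_k(0) = s_k(0)`, `h_{1,k} = -q_k(0)/(σ_{k-1}(0) σ_k(0))`, and with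
`ṽ_k = σ_{k-1}(0)⁻¹ Σ_{j=0}^{k-1} conj(q_j(0)) v_{j+1}` the isometric Arnoldi recurrences
`A v_k = s_k(0) v_{k+1} + (-1)^{k-1} c_k(0) ṽ_k` and
`ṽ_{k+1} = s_k(0) ṽ_k + (-1)^k conj(c_k(0)) v_{k+1}` hold
(`0`-based: `v_k` is `v (k-1)`, `v_{k+1}` is `v k`). -/
theorem stmt17 (n N : ℕ) (hN : 1 ≤ N) (hNn : N ≤ n)
    (A : Matrix (Fin n) (Fin n) ℂ) (b : Fin n → ℂ) (hb : b ≠ 0)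
    (v : ℕ → Fin n → ℂ)
    (horth : ∀ i j : ℕ, i < N → j < N → inn (v i) (v j) = if i = j then 1 else 0)
    (hv1 : v 0 = (((nrm b)⁻¹ : ℝ) : ℂ) • b)
    (H : Matrix (Fin N) (Fin N) ℂ)
    (hHess : ∀ i j : Fin N, (j : ℕ) + 1 < (i : ℕ) → H i j = 0)
    (hsub : ∀ (k : ℕ) (hk : k + 1 < N),
      0 < (H ⟨k + 1, hk⟩ ⟨k, Nat.lt_of_succ_lt hk⟩).re ∧
        (H ⟨k + 1, hk⟩ ⟨k, Nat.lt_of_succ_lt hk⟩).im = 0)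
    (harn : ∀ (k : ℕ) (hk : k + 1 < N),
      A.mulVec (v k) = ∑ j : Fin (k + 2),
        H ⟨(j : ℕ), Nat.lt_of_le_of_lt (Nat.lt_succ_iff.mp j.isLt) hk⟩
          ⟨k, Nat.lt_of_succ_lt hk⟩ • v (j : ℕ))
    (harnN : A.mulVec (v (N - 1)) =
      ∑ j : Fin N, H j ⟨N - 1, Nat.sub_lt hN Nat.one_pos⟩ • v (j : ℕ))
    (q : ℕ → Polynomial ℂ) (hq0 : q 0 = 1)
    (hqrec : ∀ (k : ℕ) (hk : k + 1 < N),
      Polynomial.C (H ⟨k + 1, hk⟩ ⟨k, Nat.lt_of_succ_lt hk⟩) * q (k + 1) =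
        Polynomial.X * q k -
          ∑ j : Fin (k + 1),
            Polynomial.C (H ⟨(j : ℕ), Nat.lt_trans j.isLt hk⟩ ⟨k, Nat.lt_of_succ_lt hk⟩) *
              q (j : ℕ))
    (hA : Aᴴ * A = 1) :
    ∀ (k : ℕ) (hk1 : 1 ≤ k) (hkN : k < N),
      ∀ vtk vtk1 : Fin n → ℂ,
        vtk = (((sigmaP q 0 (k - 1))⁻¹ : ℝ) : ℂ) •
            ∑ j ∈ Finset.range k, (starRingEnd ℂ) ((q j).eval 0) • v j →
        vtk1 = (((sigmaP q 0 k)⁻¹ : ℝ) : ℂ) •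
            ∑ j ∈ Finset.range (k + 1), (starRingEnd ℂ) ((q j).eval 0) • v j →
        H ⟨k, hkN⟩ ⟨k - 1, Nat.lt_of_le_of_lt (Nat.sub_le k 1) hkN⟩ =
            ((sigmaP q 0 (k - 1) / sigmaP q 0 k : ℝ) : ℂ) ∧
        H ⟨0, hN⟩ ⟨k - 1, Nat.lt_of_le_of_lt (Nat.sub_le k 1) hkN⟩ =
            -((q k).eval 0) / ((sigmaP q 0 (k - 1) * sigmaP q 0 k : ℝ) : ℂ) ∧
        A.mulVec (v (k - 1)) =
            ((sigmaP q 0 (k - 1) / sigmaP q 0 k : ℝ) : ℂ) • v k +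
              ((-1 : ℂ) ^ (k - 1) *
                ((-1 : ℂ) ^ k * (q k).eval 0 / (sigmaP q 0 k : ℂ))) • vtk ∧
        vtk1 = ((sigmaP q 0 (k - 1) / sigmaP q 0 k : ℝ) : ℂ) • vtk +
            ((-1 : ℂ) ^ k *
              (starRingEnd ℂ) ((-1 : ℂ) ^ k * (q k).eval 0 / (sigmaP q 0 k : ℂ))) • v k := by
  intro k hk1 hkN vtk vtk1 hvt hvt1
  obtain ⟨m, rfl⟩ : ∃ m, k = m + 1 := ⟨k - 1, by omega⟩
  simp only [Nat.add_sub_cancel] at hvt ⊢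
  have hm : m + 1 < N := hkN
  have M := main hN A v horth H hHess hsub harn q hq0 hqrec hA m hm
  have hσpos : ∀ j, 0 < sigmaP q 0 j := fun j => sigmaP_pos q hq0 0 j
  have hs0 : ((sigmaP q 0 m : ℝ) : ℂ) ≠ 0 := Complex.ofReal_ne_zero.mpr (ne_of_gt (hσpos m))
  have hs1 : ((sigmaP q 0 (m+1) : ℝ) : ℂ) ≠ 0 :=
    Complex.ofReal_ne_zero.mpr (ne_of_gt (hσpos (m+1)))
  -- shorthand
  have h_sub_val : hEnt H (m+1) m = ((sigmaP q 0 m / sigmaP q 0 (m+1) : ℝ) : ℂ) := by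
    push_cast
    rw [eq_div_iff hs1]
    linear_combination M.2
  have h0val : hEnt H 0 m
      = -((q (m+1)).eval 0) / ((sigmaP q 0 m * sigmaP q 0 (m+1) : ℝ) : ℂ) := by
    have h00 := M.1 0 (Nat.succ_pos m)
    simp only [hq0, Polynomial.eval_one, _root_.map_one] at h00
    rw [eq_div_iff (by push_cast; exact mul_ne_zero hs0 hs1)]
    push_cast at h00 ⊢
    linear_combination h00
  have hcolval : ∀ l, l < m + 1 → hEnt H l m
      = (-((q (m+1)).eval 0) / ((sigmaP q 0 (m+1) : ℝ) : ℂ)) * ((sigmaP q 0 m : ℝ) : ℂ)⁻¹ *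
          (starRingEnd ℂ) ((q l).eval 0) := by
    intro l hl
    have h := M.1 l hl
    push_cast at h
    field_simp
    linear_combination h
  refine ⟨?_, ?_, ?_, ?_⟩
  · exact ((hEnt_eq H hkN (Nat.lt_of_le_of_lt (Nat.sub_le (m+1) 1) hkN)).symm).trans h_sub_val
  · exact ((hEnt_eq H hN (Nat.lt_of_le_of_lt (Nat.sub_le (m+1) 1) hkN)).symm).trans h0val
  · -- third goal
    have hcoef : (-1:ℂ)^m * ((-1:ℂ)^(m+1) * (q (m+1)).eval 0 / ((sigmaP q 0 (m+1) : ℝ) : ℂ))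
        = -((q (m+1)).eval 0) / ((sigmaP q 0 (m+1) : ℝ) : ℂ) := by
      have hp : (-1:ℂ)^m * (-1:ℂ)^(m+1) = -1 := by
        rw [pow_succ, ← mul_assoc, ← pow_add, ← two_mul, pow_mul, neg_one_sq, one_pow, one_mul]
      calc (-1:ℂ)^m * ((-1:ℂ)^(m+1) * (q (m+1)).eval 0 / ((sigmaP q 0 (m+1) : ℝ) : ℂ))
          = ((-1:ℂ)^m * (-1:ℂ)^(m+1)) * (q (m+1)).eval 0 / ((sigmaP q 0 (m+1) : ℝ) : ℂ) := by
            ring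
        _ = _ := by rw [hp]; ring
    show A.mulVec (v m) = _
    rw [arnFull A v H hHess harn m hm]
    rw [hvt, hcoef]
    rw [smul_smul, Finset.smul_sum]
    have htrunc : ∑ l ∈ Finset.range N, hEnt H l m • v l
        = ∑ l ∈ Finset.range (m+2), hEnt H l m • v l := by
      refine (Finset.sum_subset (Finset.range_subset_range.mpr (by omega)) fun x hx hx' => ?_).symm
      rw [hEnt_zero H hHess (by simp only [mem_range] at hx hx'; omega), zero_smul]
    rw [htrunc, Finset.sum_range_succ, h_sub_val]
    rw [add_comm]
    congr 1
    refine Finset.sum_congr rfl fun l hl => ?_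
    rw [hcolval l (mem_range.mp hl), smul_smul]
    norm_cast
  · -- fourth goal
    have hco2 : ((-1:ℂ))^(m+1) *
        (starRingEnd ℂ) ((-1:ℂ)^(m+1) * (q (m+1)).eval 0 / ((sigmaP q 0 (m+1) : ℝ) : ℂ))
        = (starRingEnd ℂ) ((q (m+1)).eval 0) / ((sigmaP q 0 (m+1) : ℝ) : ℂ) := by
      rw [map_div₀, _root_.map_mul, map_pow, map_neg, _root_.map_one, Complex.conj_ofReal]
      rw [← mul_div_assoc, ← mul_assoc, ← pow_add, ← two_mul, pow_mul, neg_one_sq, one_pow,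
        one_mul]
    rw [hvt1, hvt, hco2, Finset.sum_range_succ, smul_add, smul_smul, smul_smul]
    congr 1
    · congr 1
      push_cast
      field_simp
    · congr 1
      push_cast
      ring
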